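/- Proposition 1: For every operator T: X → Y and every n ≥ 1, μ_n(T) ≤ μ_{2n}°°(T). That is, the least constant for arbitrary sign changes of the first n Haar levels is bounded by the least constant for the fixed alternating signs (−1)^k over 2n levels. -/

import Mathlib

open MeasureTheory Set

/-- The Haar function `χ_k^{(j)}` on `[0,1)`. -/
noncomputable def haar (k j : ℕ) (t : ℝ) : ℝ :=
  if ((2*j:ℝ)-2)/2^k ≤ t ∧ t < ((2*j:ℝ)-1)/2^k then (2:ℝ) ^ (((k:ℝ)-1)/2)
  else if ((2*j:ℝ)-1)/2^k ≤ t ∧ t < (2*j:ℝ)/2^k then -((2:ℝ) ^ (((k:ℝ)-1)/2))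
  else 0

/-- The `L_2` norm on `[0,1)` of an `X`-valued function. -/
noncomputable def l2norm {X : Type*} [NormedAddCommGroup X] (g : ℝ → X) : ℝ :=
  Real.sqrt (∫ t in Ico (0:ℝ) 1, ‖g t‖^2)

/-- `Σ_{(k,j), m ≤ k ≤ n} ε_k^{(j)} x_k^{(j)} χ_k^{(j)}(t)`. -/
noncomputable def walshSum {X : Type*} [NormedAddCommGroup X] [NormedSpace ℝ X]
    (x : ℕ → ℕ → X) (ε : ℕ → ℕ → ℝ) (m n : ℕ) (t : ℝ) : X :=
  ∑ k ∈ Finset.Icc m n, ∑ j ∈ Finset.Icc 1 (2^(k-1)), (ε k j * haar k j t) • x k j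

/-- `μ_n(T)`: least `c ≥ 1` for arbitrary sign changes. -/
noncomputable def mu {X Y : Type*} [NormedAddCommGroup X] [NormedSpace ℝ X]
    [NormedAddCommGroup Y] [NormedSpace ℝ Y] (T : X →L[ℝ] Y) (n : ℕ) : ℝ :=
  sInf {c : ℝ | 1 ≤ c ∧ ∀ (x : ℕ → ℕ → X) (ε : ℕ → ℕ → ℝ),
    (∀ k j, ε k j = 1 ∨ ε k j = -1) →
    l2norm (walshSum (fun k j => T (x k j)) ε 1 n) ≤
      c * l2norm (walshSum x (fun _ _ => 1) 1 n)}

/-- `μ_n°(T)`: least `c ≥ 1` for level-constant sign changes. -/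
noncomputable def muCirc {X Y : Type*} [NormedAddCommGroup X] [NormedSpace ℝ X]
    [NormedAddCommGroup Y] [NormedSpace ℝ Y] (T : X →L[ℝ] Y) (n : ℕ) : ℝ :=
  sInf {c : ℝ | 1 ≤ c ∧ ∀ (x : ℕ → ℕ → X) (ε : ℕ → ℝ),
    (∀ k, ε k = 1 ∨ ε k = -1) →
    l2norm (walshSum (fun k j => T (x k j)) (fun k _ => ε k) 1 n) ≤
      c * l2norm (walshSum x (fun _ _ => 1) 1 n)}

/-- `μ_n°°(T)`: least `c ≥ 1` for the fixed signs `(-1)^k`. -/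
noncomputable def muCC {X Y : Type*} [NormedAddCommGroup X] [NormedSpace ℝ X]
    [NormedAddCommGroup Y] [NormedSpace ℝ Y] (T : X →L[ℝ] Y) (n : ℕ) : ℝ :=
  sInf {c : ℝ | 1 ≤ c ∧ ∀ (x : ℕ → ℕ → X),
    l2norm (walshSum (fun k j => T (x k j)) (fun k _ => (-1)^k) 1 n) ≤
      c * l2norm (walshSum x (fun _ _ => 1) 1 n)}

namespace Prop1

/-- binary digit of `i` at level `k` (out of `N`). -/
def dd (N k i : ℕ) : ℕ := (i / 2^(N-k)) % 2
/-- Haar index active at `i` at level `k`. -/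
def jj (N k i : ℕ) : ℕ := i / 2^(N-k+1) + 1

lemma nat_div_eq_iff {M i q : ℕ} (hM : 0 < M) : i / M = q ↔ q * M ≤ i ∧ i < (q+1) * M := by
  constructor
  · rintro rfl
    exact ⟨Nat.div_mul_le_self i M, (Nat.div_lt_iff_lt_mul hM).1 (Nat.lt_succ_self _)⟩
  · rintro ⟨h1, h2⟩
    have := (Nat.le_div_iff_mul_le hM).2 h1
    have := (Nat.div_lt_iff_lt_mul hM).2 h2
    omega

lemma cast_le_iff {k N : ℕ} (a i : ℕ) (hkN : k ≤ N) :
    ((a:ℝ)/2^k ≤ (i:ℝ)/2^N) ↔ a * 2^(N-k) ≤ i := by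
  rw [div_le_div_iff₀ (by positivity) (by positivity)]
  have h2N : (2:ℝ)^N = 2^(N-k) * 2^k := by
    rw [← pow_add]; congr 1; omega
  rw [h2N, ← mul_assoc, mul_le_mul_iff_left₀ (by positivity : (0:ℝ) < 2^k)]
  exact_mod_cast Iff.rfl

lemma cast_lt_iff {k N : ℕ} (a i : ℕ) (hkN : k ≤ N) :
    ((i:ℝ)/2^N < (a:ℝ)/2^k) ↔ i < a * 2^(N-k) := by
  rw [div_lt_div_iff₀ (by positivity) (by positivity)]
  have h2N : (2:ℝ)^N = 2^(N-k) * 2^k := by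
    rw [← pow_add]; congr 1; omega
  rw [h2N, ← mul_assoc, mul_lt_mul_iff_left₀ (by positivity : (0:ℝ) < 2^k)]
  exact_mod_cast Iff.rfl

lemma cond_iff {k N : ℕ} (a i : ℕ) (hkN : k ≤ N) :
    ((a:ℝ)/2^k ≤ (i:ℝ)/2^N ∧ (i:ℝ)/2^N < ((a:ℝ)+1)/2^k) ↔ i / 2^(N-k) = a := by
  have h1 : ((a:ℝ)+1) = ((a+1 : ℕ) : ℝ) := by push_cast; ring
  rw [h1, and_congr (cast_le_iff a i hkN) (cast_lt_iff (a+1) i hkN),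
    nat_div_eq_iff (Nat.pow_pos (by norm_num))]

lemma haar_eval_eq_aux {k N i q j : ℕ} (hk : 1 ≤ k) (hkN : k ≤ N)
    (hq : i / 2^(N-k) = q) (hj : j = q/2 + 1) :
    haar k j ((i:ℝ)/2^N) = (-1:ℝ)^(q % 2) * (2:ℝ) ^ (((k:ℝ)-1)/2) := by
  have hA : (2*(j:ℝ)-2) = (((2*j-2 : ℕ)) : ℝ) := by
    have : (2 ≤ 2*j) := by omega
    push_cast [this]; ring
  have hB : (2*(j:ℝ)-1) = (((2*j-2 : ℕ)) : ℝ) + 1 := by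
    have : (2 ≤ 2*j) := by omega
    push_cast [this]; ring
  have hC : (2*(j:ℝ)) = (((2*j-1 : ℕ)) : ℝ) + 1 := by
    have : (1 ≤ 2*j) := by omega
    push_cast [this]; ring
  have hB' : (2*(j:ℝ)-1) = (((2*j-1 : ℕ)) : ℝ) := by
    have : (1 ≤ 2*j) := by omega
    push_cast [this]; ring
  have c1 : ((2*(j:ℝ)-2)/2^k ≤ (i:ℝ)/2^N ∧ (i:ℝ)/2^N < (2*(j:ℝ)-1)/2^k) ↔ q = 2*j-2 := by
    rw [hA, hB, cond_iff _ i hkN, hq, eq_comm]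
  have c2 : ((2*(j:ℝ)-1)/2^k ≤ (i:ℝ)/2^N ∧ (i:ℝ)/2^N < (2*(j:ℝ))/2^k) ↔ q = 2*j-1 := by
    rw [hB', hC, cond_iff _ i hkN, hq, eq_comm]
  rcases Nat.mod_two_eq_zero_or_one q with hpar | hpar
  · have hqq : q = 2*j-2 := by omega
    rw [haar, if_pos (c1.2 hqq), hpar, pow_zero, one_mul]
  · have hqq : q = 2*j-1 := by omega
    have hne : ¬ (q = 2*j-2) := by omega
    rw [haar, if_neg (fun h => hne (c1.1 h)), if_pos (c2.2 hqq), hpar, pow_one, neg_one_mul]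

lemma jj_eq {k N i : ℕ} : jj N k i = (i / 2^(N-k)) / 2 + 1 := by
  rw [jj, Nat.div_div_eq_div_mul, ← pow_succ]

lemma haar_eval_eq {k N i : ℕ} (hk : 1 ≤ k) (hkN : k ≤ N) :
    haar k (jj N k i) ((i:ℝ)/2^N) = (-1:ℝ)^(dd N k i) * (2:ℝ) ^ (((k:ℝ)-1)/2) := by
  exact haar_eval_eq_aux hk hkN rfl jj_eq

lemma haar_eval_ne_aux {k N i q j : ℕ} (hk : 1 ≤ k) (hkN : k ≤ N)
    (hq : i / 2^(N-k) = q) (hj : 1 ≤ j) (hne : j ≠ q/2 + 1) :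
    haar k j ((i:ℝ)/2^N) = 0 := by
  have hA : (2*(j:ℝ)-2) = (((2*j-2 : ℕ)) : ℝ) := by
    have : (2 ≤ 2*j) := by omega
    push_cast [this]; ring
  have hB : (2*(j:ℝ)-1) = (((2*j-2 : ℕ)) : ℝ) + 1 := by
    have : (2 ≤ 2*j) := by omega
    push_cast [this]; ring
  have hC : (2*(j:ℝ)) = (((2*j-1 : ℕ)) : ℝ) + 1 := by
    have : (1 ≤ 2*j) := by omega
    push_cast [this]; ring
  have hB' : (2*(j:ℝ)-1) = (((2*j-1 : ℕ)) : ℝ) := by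
    have : (1 ≤ 2*j) := by omega
    push_cast [this]; ring
  have c1 : ((2*(j:ℝ)-2)/2^k ≤ (i:ℝ)/2^N ∧ (i:ℝ)/2^N < (2*(j:ℝ)-1)/2^k) ↔ q = 2*j-2 := by
    rw [hA, hB, cond_iff _ i hkN, hq, eq_comm]
  have c2 : ((2*(j:ℝ)-1)/2^k ≤ (i:ℝ)/2^N ∧ (i:ℝ)/2^N < (2*(j:ℝ))/2^k) ↔ q = 2*j-1 := by
    rw [hB', hC, cond_iff _ i hkN, hq, eq_comm]
  rw [haar, if_neg, if_neg]
  · rw [c2]; omega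
  · rw [c1]; omega

lemma haar_eval_ne {k N i j : ℕ} (hk : 1 ≤ k) (hkN : k ≤ N) (hj : 1 ≤ j)
    (hne : j ≠ jj N k i) : haar k j ((i:ℝ)/2^N) = 0 := by
  exact haar_eval_ne_aux hk hkN rfl hj (by rwa [← jj_eq])

lemma cast_le_iff' {k N : ℕ} (a i : ℕ) (hkN : k ≤ N) :
    ((i:ℝ)/2^N ≤ (a:ℝ)/2^k) ↔ i ≤ a * 2^(N-k) := by
  rw [div_le_div_iff₀ (by positivity) (by positivity)]
  have h2N : (2:ℝ)^N = 2^(N-k) * 2^k := by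
    rw [← pow_add]; congr 1; omega
  rw [h2N, ← mul_assoc, mul_le_mul_iff_left₀ (by positivity : (0:ℝ) < 2^k)]
  exact_mod_cast Iff.rfl

lemma haar_congr {k j : ℕ} {t s : ℝ}
    (h1 : (((2*j:ℝ)-2)/2^k ≤ t ∧ t < ((2*j:ℝ)-1)/2^k) ↔ (((2*j:ℝ)-2)/2^k ≤ s ∧ s < ((2*j:ℝ)-1)/2^k))
    (h2 : (((2*j:ℝ)-1)/2^k ≤ t ∧ t < (2*j:ℝ)/2^k) ↔ (((2*j:ℝ)-1)/2^k ≤ s ∧ s < (2*j:ℝ)/2^k)) :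
    haar k j t = haar k j s := by
  unfold haar
  rw [if_congr h1 rfl (if_congr h2 rfl rfl)]

lemma haar_const {k N i j : ℕ} {t : ℝ} (hkN : k ≤ N) (hj : 1 ≤ j)
    (ht : t ∈ Ico ((i:ℝ)/2^N) (((i:ℝ)+1)/2^N)) :
    haar k j t = haar k j ((i:ℝ)/2^N) := by
  obtain ⟨ht1, ht2⟩ := ht
  have hip : ((i:ℝ)+1) = ((i+1:ℕ):ℝ) := by push_cast; ring
  rw [hip] at ht2
  have key_le : ∀ a : ℕ, ((a:ℝ)/2^k ≤ t ↔ (a:ℝ)/2^k ≤ (i:ℝ)/2^N) := by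
    intro a
    constructor
    · intro h
      have h2 : ¬ (((i+1:ℕ):ℝ)/2^N ≤ (a:ℝ)/2^k) := not_le.2 (lt_of_le_of_lt h ht2)
      rw [cast_le_iff' a (i+1) hkN] at h2
      exact (cast_le_iff a i hkN).2 (by omega)
    · intro h; exact le_trans h ht1
  have key_lt : ∀ a : ℕ, (t < (a:ℝ)/2^k ↔ (i:ℝ)/2^N < (a:ℝ)/2^k) := by
    intro a
    constructor
    · intro h; exact lt_of_le_of_lt ht1 h
    · intro h
      have h4 : i < a * 2^(N-k) := (cast_lt_iff a i hkN).1 h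
      have h6 : ((i+1:ℕ):ℝ)/2^N ≤ (a:ℝ)/2^k := (cast_le_iff' a (i+1) hkN).2 (by omega)
      exact lt_of_lt_of_le ht2 h6
  have hA : (2*(j:ℝ)-2) = (((2*j-2 : ℕ)) : ℝ) := by
    have : (2 ≤ 2*j) := by omega
    push_cast [this]; ring
  have hB' : (2*(j:ℝ)-1) = (((2*j-1 : ℕ)) : ℝ) := by
    have : (1 ≤ 2*j) := by omega
    push_cast [this]; ring
  have hC : (2*(j:ℝ)) = (((2*j : ℕ)) : ℝ) := by push_cast; ring
  apply haar_congr
  · rw [hA, hB']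
    exact and_congr (key_le _) (key_lt _)
  · rw [hB', hC]
    exact and_congr (key_le _) (key_lt _)


section Eval
variable {X : Type*} [NormedAddCommGroup X] [NormedSpace ℝ X]

/-- discrete value of a Walsh sum at the `i`-th dyadic point. -/
noncomputable def dVal (z : ℕ → ℕ → X) (η : ℕ → ℕ → ℝ) (N i : ℕ) : X :=
  ∑ k ∈ Finset.Icc 1 N, ((η k (jj N k i)) * (-1:ℝ)^(dd N k i) * (2:ℝ) ^ (((k:ℝ)-1)/2)) • z k (jj N k i)

lemma jj_le {k N i : ℕ} (hk : 1 ≤ k) (hkN : k ≤ N) (hi : i < 2^N) :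
    jj N k i ∈ Finset.Icc 1 (2^(k-1)) := by
  rw [Finset.mem_Icc, jj]
  refine ⟨Nat.le_add_left 1 _, ?_⟩
  have h1 : i < 2^(k-1) * 2^(N-k+1) := by
    rw [← pow_add]
    have : k - 1 + (N - k + 1) = N := by omega
    rw [this]; exact hi
  exact Nat.div_lt_of_lt_mul (by rwa [mul_comm] at h1)

lemma walshSum_apply {z : ℕ → ℕ → X} {η : ℕ → ℕ → ℝ} {N i : ℕ} (hi : i < 2^N) :
    walshSum z η 1 N ((i:ℝ)/2^N) = dVal z η N i := by
  rw [walshSum, dVal]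
  apply Finset.sum_congr rfl
  intro k hk
  rw [Finset.mem_Icc] at hk
  rw [Finset.sum_eq_single (jj N k i)]
  · rw [haar_eval_eq hk.1 hk.2, mul_assoc]
  · intro j hjmem hne
    rw [Finset.mem_Icc] at hjmem
    rw [haar_eval_ne hk.1 hk.2 hjmem.1 hne, mul_zero, zero_smul]
  · intro hnot
    exact absurd (jj_le hk.1 hk.2 hi) hnot

lemma walshSum_const {z : ℕ → ℕ → X} {η : ℕ → ℕ → ℝ} {N i : ℕ} {t : ℝ}
    (ht : t ∈ Ico ((i:ℝ)/2^N) (((i:ℝ)+1)/2^N)) :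
    walshSum z η 1 N t = walshSum z η 1 N ((i:ℝ)/2^N) := by
  rw [walshSum, walshSum]
  apply Finset.sum_congr rfl
  intro k hk
  rw [Finset.mem_Icc] at hk
  apply Finset.sum_congr rfl
  intro j hj
  rw [Finset.mem_Icc] at hj
  rw [haar_const hk.2 hj.1 ht]

lemma Ico_eq_biUnion (N : ℕ) :
    Ico (0:ℝ) 1 = ⋃ i ∈ Finset.range (2^N), Ico ((i:ℝ)/2^N) (((i:ℝ)+1)/2^N) := by
  ext t
  simp only [mem_Ico, Set.mem_iUnion, Finset.mem_range]
  constructor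
  · rintro ⟨h0, h1⟩
    have hpos : (0:ℝ) < 2^N := by positivity
    set i := ⌊t * 2^N⌋₊ with hidef
    have hti : (i:ℝ) ≤ t * 2^N := Nat.floor_le (by positivity)
    have hti2 : t * 2^N < i + 1 := Nat.lt_floor_add_one _
    refine ⟨i, ?_, ?_, ?_⟩
    · have : t * 2^N < 2^N := by nlinarith
      have h2 : (i:ℝ) < 2^N := lt_of_le_of_lt hti this
      exact_mod_cast by exact_mod_cast lt_of_lt_of_le h2 (by norm_num : ((2:ℝ)^N ≤ (2^N:ℕ)))
    · rw [div_le_iff₀ hpos]; linarith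
    · rw [lt_div_iff₀ hpos]; linarith
  · rintro ⟨i, hiN, h1, h2⟩
    have hpos : (0:ℝ) < 2^N := by positivity
    constructor
    · exact le_trans (by positivity) h1
    · have : ((i:ℝ)+1) ≤ 2^N := by
        have : (i:ℝ) + 1 ≤ (2^N : ℕ) := by exact_mod_cast hiN
        calc (i:ℝ)+1 ≤ ((2^N:ℕ):ℝ) := this
        _ = 2^N := by push_cast; ring
      calc t < ((i:ℝ)+1)/2^N := h2
      _ ≤ 1 := by rw [div_le_one hpos]; linarith

lemma pieces_disjoint {N : ℕ} : Set.Pairwise ↑(Finset.range (2^N))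
    (Function.onFun Disjoint (fun i : ℕ => Ico ((i:ℝ)/2^N) (((i:ℝ)+1)/2^N))) := by
  intro a _ b _ hab
  have hpos : (0:ℝ) < 2^N := by positivity
  rw [Function.onFun, Set.Ico_disjoint_Ico]
  rcases lt_or_gt_of_ne hab with h | h
  · refine le_trans (min_le_left _ _) (le_trans ?_ (le_max_right _ _))
    have hc : (a:ℝ)+1 ≤ (b:ℝ) := by exact_mod_cast h
    gcongr
  · refine le_trans (min_le_right _ _) (le_trans ?_ (le_max_left _ _))
    have hc : (b:ℝ)+1 ≤ (a:ℝ) := by exact_mod_cast h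
    gcongr

lemma integral_walshSum (z : ℕ → ℕ → X) (η : ℕ → ℕ → ℝ) (N : ℕ) :
    ∫ t in Ico (0:ℝ) 1, ‖walshSum z η 1 N t‖^2 =
      ∑ i ∈ Finset.range (2^N), ((2:ℝ)^N)⁻¹ * ‖dVal z η N i‖^2 := by
  have hconst : ∀ i < 2^N, Set.EqOn (fun t => ‖walshSum z η 1 N t‖^2)
      (fun _ => ‖dVal z η N i‖^2) (Ico ((i:ℝ)/2^N) (((i:ℝ)+1)/2^N)) := by
    intro i hi t ht
    simp only
    rw [walshSum_const ht, walshSum_apply hi]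
  have hint : ∀ i ∈ Finset.range (2^N), MeasureTheory.IntegrableOn
      (fun t => ‖walshSum z η 1 N t‖^2) (Ico ((i:ℝ)/2^N) (((i:ℝ)+1)/2^N)) := by
    intro i hi
    rw [Finset.mem_range] at hi
    exact (MeasureTheory.integrableOn_congr_fun (hconst i hi) measurableSet_Ico).2
      (MeasureTheory.integrableOn_const measure_Ico_lt_top.ne)
  rw [Ico_eq_biUnion N, MeasureTheory.integral_biUnion_finset _
    (fun i _ => measurableSet_Ico) pieces_disjoint hint]
  apply Finset.sum_congr rfl
  intro i hi
  rw [Finset.mem_range] at hi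
  rw [MeasureTheory.setIntegral_congr_fun measurableSet_Ico (hconst i hi),
    MeasureTheory.setIntegral_const, measureReal_def, Real.volume_Ico]
  have hlen : ((i:ℝ)+1)/2^N - (i:ℝ)/2^N = ((2:ℝ)^N)⁻¹ := by
    field_simp
    ring
  rw [hlen, ENNReal.toReal_ofReal (by positivity), smul_eq_mul]

lemma l2norm_walshSum (z : ℕ → ℕ → X) (η : ℕ → ℕ → ℝ) (N : ℕ) :
    l2norm (walshSum z η 1 N) =
      Real.sqrt (∑ i ∈ Finset.range (2^N), ((2:ℝ)^N)⁻¹ * ‖dVal z η N i‖^2) := by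
  rw [l2norm, integral_walshSum]

end Eval
section Comb

/-- node recursion: original Haar index reached after `m` steps with base-4 history `c`. -/
noncomputable def nd (ε : ℕ → ℕ → ℝ) : ℕ → ℕ → ℕ
  | 0, _ => 1
  | (m+1), c => 2 * nd ε m (c/4) - 1 +
      (if ε (m+1) (nd ε m (c/4)) = -1 then (c%4)/2 else (c%4)%2)

/-- the extracted bit at step `m ≥ 1` given base-4 history `c` (of the first `m` pairs). -/
noncomputable def db (ε : ℕ → ℕ → ℝ) (m c : ℕ) : ℕ :=
  if ε m (nd ε (m-1) (c/4)) = -1 then (c%4)/2 else (c%4)%2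

/-- the extracted binary number after `m` steps. -/
noncomputable def Phi (ε : ℕ → ℕ → ℝ) : ℕ → ℕ → ℕ
  | 0, _ => 0
  | (m+1), c => 2 * Phi ε m (c/4) + db ε (m+1) c

/-- the level used at step `k` (with history `c` of the first `k-1` pairs). -/
noncomputable def lv (ε : ℕ → ℕ → ℝ) (k c : ℕ) : ℕ :=
  if ε k (nd ε (k-1) c) = -1 then 2*k-1 else 2*k

lemma nd_zero (ε : ℕ → ℕ → ℝ) (c : ℕ) : nd ε 0 c = 1 := rfl
lemma nd_succ (ε : ℕ → ℕ → ℝ) (m c : ℕ) : nd ε (m+1) c = 2 * nd ε m (c/4) - 1 +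
    (if ε (m+1) (nd ε m (c/4)) = -1 then (c%4)/2 else (c%4)%2) := rfl
lemma db_def (ε : ℕ → ℕ → ℝ) (m c : ℕ) :
    db ε m c = if ε m (nd ε (m-1) (c/4)) = -1 then (c%4)/2 else (c%4)%2 := rfl
lemma Phi_zero (ε : ℕ → ℕ → ℝ) (c : ℕ) : Phi ε 0 c = 0 := rfl
lemma Phi_succ (ε : ℕ → ℕ → ℝ) (m c : ℕ) :
    Phi ε (m+1) c = 2 * Phi ε m (c/4) + db ε (m+1) c := rfl

lemma db_le_one (ε : ℕ → ℕ → ℝ) (m c : ℕ) : db ε m c ≤ 1 := by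
  rw [db_def]; split <;> omega

lemma nd_eq_Phi (ε : ℕ → ℕ → ℝ) : ∀ m c, nd ε m c = Phi ε m c + 1 := by
  intro m
  induction m with
  | zero => intro c; rfl
  | succ m ih =>
    intro c
    rw [nd_succ, Phi_succ, db_def]
    have h1 : m + 1 - 1 = m := by omega
    rw [h1, ih]
    split <;> omega

lemma Phi_lt (ε : ℕ → ℕ → ℝ) : ∀ m c, Phi ε m c < 2^m := by
  intro m
  induction m with
  | zero => intro c; simp [Phi_zero]
  | succ m ih =>
    intro c
    have h1 := ih (c/4)
    have h2 := db_le_one ε (m+1) c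
    rw [Phi_succ, pow_succ]
    omega

lemma Phi_div (ε : ℕ → ℕ → ℝ) : ∀ m k c, k ≤ m →
    Phi ε m c / 2^(m-k) = Phi ε k (c / 4^(m-k)) := by
  intro m
  induction m with
  | zero =>
    intro k c hk
    have h : k = 0 := by omega
    subst h
    simp [Phi_zero]
  | succ m ih =>
    intro k c hk
    rcases Nat.eq_or_lt_of_le hk with h | h
    · subst h
      simp
    · have hk' : k ≤ m := by omega
      have h1 : m + 1 - k = (m - k) + 1 := by omega
      have hd := db_le_one ε (m+1) c
      rw [h1, Phi_succ]
      have h2 : (2 * Phi ε m (c/4) + db ε (m+1) c) / 2^((m-k)+1)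
          = Phi ε m (c/4) / 2^(m-k) := by
        rw [pow_succ, mul_comm ((2:ℕ)^(m-k)) 2, ← Nat.div_div_eq_div_mul]
        congr 1
        omega
      rw [h2, ih k (c/4) hk', Nat.div_div_eq_div_mul, ← pow_succ']
  
lemma Phi_mod (ε : ℕ → ℕ → ℝ) (m c : ℕ) : Phi ε (m+1) c % 2 = db ε (m+1) c := by
  have := db_le_one ε (m+1) c
  rw [Phi_succ]
  omega

lemma dd_Phi {ε : ℕ → ℕ → ℝ} {n k c : ℕ} (hk1 : 1 ≤ k) (hk : k ≤ n) :
    dd n k (Phi ε n c) = db ε k (c / 4^(n-k)) := by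
  rw [dd, Phi_div ε n k c hk]
  obtain ⟨m, rfl⟩ : ∃ m, k = m + 1 := ⟨k - 1, by omega⟩
  exact Phi_mod ε m _

lemma jj_Phi {ε : ℕ → ℕ → ℝ} {n k c : ℕ} (hk1 : 1 ≤ k) (hk : k ≤ n) :
    jj n k (Phi ε n c) = nd ε (k-1) (c / 4^(n-k+1)) := by
  rw [jj]
  have h1 : n - k + 1 = n - (k-1) := by omega
  rw [h1, Phi_div ε n (k-1) c (by omega), nd_eq_Phi]

lemma sum_range_two_mul (M : ℕ) (f : ℕ → ℝ) :
    ∑ i ∈ Finset.range (2*M), f i = ∑ i ∈ Finset.range M, (f (2*i) + f (2*i+1)) := by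
  induction M with
  | zero => simp
  | succ M ih =>
    have h : 2*(M+1) = (2*M+1)+1 := by ring
    rw [h, Finset.sum_range_succ, Finset.sum_range_succ, ih, Finset.sum_range_succ]
    ring

lemma sum_div_mod (a b : ℕ) (f : ℕ → ℝ) (hb : 0 < b) :
    ∑ c ∈ Finset.range (a*b), f c
      = ∑ q ∈ Finset.range a, ∑ e ∈ Finset.range b, f (b * q + e) := by
  rw [← Finset.sum_product']
  apply Finset.sum_nbij' (i := fun c => (c / b, c % b)) (j := fun p => b * p.1 + p.2)
  · intro c hc
    rw [Finset.mem_range] at hc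
    rw [Finset.mem_product, Finset.mem_range, Finset.mem_range]
    exact ⟨Nat.div_lt_of_lt_mul (by rwa [mul_comm] at hc), Nat.mod_lt _ hb⟩
  · intro p hp
    rw [Finset.mem_product, Finset.mem_range, Finset.mem_range] at hp
    rw [Finset.mem_range]
    have := hp.1
    have := hp.2
    calc b * p.1 + p.2 < b * p.1 + b := by omega
    _ = b * (p.1 + 1) := by ring
    _ ≤ b * a := Nat.mul_le_mul_left b (by omega)
    _ = a * b := by ring
  · intro c hc
    exact Nat.div_add_mod c b
  · intro p hp
    rw [Finset.mem_product, Finset.mem_range, Finset.mem_range] at hp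
    have h1 : (b * p.1 + p.2) / b = p.1 := by
      rw [Nat.mul_add_div hb, Nat.div_eq_of_lt hp.2]
      omega
    have h2 : (b * p.1 + p.2) % b = p.2 := by
      rw [Nat.mul_add_mod, Nat.mod_eq_of_lt hp.2]
    rw [h1, h2]
  · intro c hc
    exact congrArg f (Nat.div_add_mod c b).symm

lemma Phi_succ_explicit (ε : ℕ → ℕ → ℝ) (m q e : ℕ) (he : e < 4) :
    Phi ε (m+1) (4*q+e) = 2 * Phi ε m q +
      (if ε (m+1) (nd ε m q) = -1 then e/2 else e%2) := by
  rw [Phi_succ, db_def]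
  have h1 : (4*q+e)/4 = q := by omega
  have h2 : (4*q+e)%4 = e := by omega
  have h3 : m + 1 - 1 = m := by omega
  rw [h1, h2, h3]

lemma sum_Phi (ε : ℕ → ℕ → ℝ) : ∀ (m : ℕ) (f : ℕ → ℝ),
    ∑ c ∈ Finset.range (4^m), f (Phi ε m c) = 2^m * ∑ i ∈ Finset.range (2^m), f i := by
  intro m
  induction m with
  | zero => intro f; simp [Phi_zero]
  | succ m ih =>
    intro f
    have h4 : (4:ℕ)^(m+1) = 4^m * 4 := pow_succ 4 m
    rw [h4, sum_div_mod _ 4 _ (by norm_num)]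
    have key : ∀ q, ∑ e ∈ Finset.range 4, f (Phi ε (m+1) (4*q+e))
        = 2 * (f (2 * Phi ε m q) + f (2 * Phi ε m q + 1)) := by
      intro q
      rw [show (4:ℕ) = 3+1 from rfl, Finset.sum_range_succ, Finset.sum_range_succ,
        Finset.sum_range_succ, Finset.sum_range_one]
      rw [Phi_succ_explicit ε m q 0 (by norm_num), Phi_succ_explicit ε m q 1 (by norm_num),
        Phi_succ_explicit ε m q 2 (by norm_num), Phi_succ_explicit ε m q 3 (by norm_num)]
      by_cases hcase : ε (m+1) (nd ε m q) = -1
      · rw [if_pos hcase, if_pos hcase, if_pos hcase, if_pos hcase]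
        norm_num
        ring
      · rw [if_neg hcase, if_neg hcase, if_neg hcase, if_neg hcase]
        norm_num
        ring
    rw [Finset.sum_congr rfl (fun q _ => key q)]
    have expand : ∑ q ∈ Finset.range (4^m), (2:ℝ) * (f (2 * Phi ε m q) + f (2 * Phi ε m q + 1))
        = 2 * ((∑ q ∈ Finset.range (4^m), (fun i => f (2*i)) (Phi ε m q))
             + (∑ q ∈ Finset.range (4^m), (fun i => f (2*i+1)) (Phi ε m q))) := by
      rw [← Finset.sum_add_distrib, ← Finset.mul_sum]
    rw [expand, ih (fun i => f (2*i)), ih (fun i => f (2*i+1))]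
    have h2 : (2:ℕ)^(m+1) = 2 * 2^m := by ring
    rw [h2, sum_range_two_mul, Finset.sum_add_distrib]
    ring

end Comb
section Xp
variable {X Y : Type*} [NormedAddCommGroup X] [NormedSpace ℝ X]
  [NormedAddCommGroup Y] [NormedSpace ℝ Y]

lemma four_pow (a : ℕ) : (4:ℕ)^a = 2^(2*a) := by
  rw [show (4:ℕ) = 2^2 by norm_num, ← pow_mul]

lemma sum_Icc_pairs {E : Type*} [AddCommMonoid E] (n : ℕ) (F : ℕ → E) :
    ∑ l ∈ Finset.Icc 1 (2*n), F l = ∑ k ∈ Finset.Icc 1 n, (F (2*k-1) + F (2*k)) := by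
  induction n with
  | zero => simp
  | succ n ih =>
    have h1 : 2*(n+1) = (2*n+1)+1 := by ring
    rw [h1, Finset.sum_Icc_succ_top (by omega), Finset.sum_Icc_succ_top (by omega), ih,
      Finset.sum_Icc_succ_top (by omega : 1 ≤ n+1)]
    have e1 : 2*(n+1)-1 = 2*n+1 := by omega
    have e2 : 2*(n+1) = 2*n+1+1 := by omega
    rw [e1, e2]
    abel

/-- the transplanted coefficient family on `2n` levels. -/
noncomputable def xp (ε : ℕ → ℕ → ℝ) (n : ℕ) (z : ℕ → ℕ → X) (l j' : ℕ) : X :=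
  if 1 ≤ l ∧ l ≤ 2*n ∧ lv ε ((l+1)/2) (if l % 2 = 1 then j' - 1 else (j' - 1)/2) = l
  then ((2:ℝ) ^ (((((l+1)/2 : ℕ):ℝ)-1)/2) / (2:ℝ) ^ (((l:ℝ)-1)/2)) •
        z ((l+1)/2) (nd ε ((l+1)/2 - 1) (if l % 2 = 1 then j' - 1 else (j' - 1)/2))
  else 0

lemma xp_T (ε : ℕ → ℕ → ℝ) (n : ℕ) (z : ℕ → ℕ → X) (T : X →L[ℝ] Y) (l j' : ℕ) :
    xp ε n (fun k j => T (z k j)) l j' = T (xp ε n z l j') := by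
  rw [xp, xp]
  split_ifs <;> first
    | exact (T.map_smul _ _).symm
    | exact (map_zero T).symm

lemma dVal_xp (ε : ℕ → ℕ → ℝ) (hε : ∀ k j, ε k j = 1 ∨ ε k j = -1) (n : ℕ) (z : ℕ → ℕ → X)
    (δ' : ℕ → ℝ) (η : ℕ → ℕ → ℝ)
    (hcomp : ∀ k j, 1 ≤ k → k ≤ n → δ' (if ε k j = -1 then 2*k-1 else 2*k) = η k j)
    (i : ℕ) :
    dVal (xp ε n z) (fun l _ => δ' l) (2*n) i = dVal z η n (Phi ε n i) := by
  rw [dVal, dVal, sum_Icc_pairs]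
  apply Finset.sum_congr rfl
  intro k hk
  rw [Finset.mem_Icc] at hk
  obtain ⟨hk1, hkn⟩ := hk
  have hnk1 : n - k + 1 = (n-k) + 1 := by omega
  -- history and node
  set c := i / 4^(n-k+1) with hc
  set J := nd ε (k-1) c with hJ
  set e := (i / 4^(n-k)) % 4 with he
  -- RHS rewrites
  rw [jj_Phi hk1 hkn, dd_Phi hk1 hkn, ← hc, ← hJ]
  have hdb : db ε k (i / 4^(n-k)) = if ε k J = -1 then e/2 else e % 2 := by
    rw [db_def, Nat.div_div_eq_div_mul, ← pow_succ, ← hnk1, ← hc, ← he, hJ]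
  rw [hdb]
  -- parity facts
  have hk1' : (2*k-1+1)/2 = k := by omega
  have hk2' : (2*k+1)/2 = k := by omega
  have hjodd : jj (2*n) (2*k-1) i - 1 = c := by
    rw [jj, Nat.add_sub_cancel, hc, four_pow,
      show 2*n - (2*k-1) + 1 = 2*(n-k+1) by omega]
  have hjeven : (jj (2*n) (2*k) i - 1) / 2 = c := by
    rw [jj, Nat.add_sub_cancel, Nat.div_div_eq_div_mul, ← pow_succ, hc, four_pow,
      show 2*n - 2*k + 1 + 1 = 2*(n-k+1) by omega]
  have hddodd : dd (2*n) (2*k-1) i = e / 2 := by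
    rw [dd, he, four_pow]
    have h1 : 2*n - (2*k-1) = 2*(n-k) + 1 := by omega
    rw [h1, pow_succ, ← Nat.div_div_eq_div_mul]
    generalize i / 2^(2*(n-k)) = a
    omega
  have hddeven : dd (2*n) (2*k) i = e % 2 := by
    rw [dd, he, four_pow]
    have h1 : 2*n - 2*k = 2*(n-k) := by omega
    rw [h1]
    generalize i / 2^(2*(n-k)) = a
    omega
  have hA1 : (2:ℝ) ^ (((((2*k-1:ℕ)):ℝ)-1)/2) ≠ 0 := ne_of_gt (Real.rpow_pos_of_pos two_pos _)
  have hA2 : (2:ℝ) ^ (((((2*k:ℕ)):ℝ)-1)/2) ≠ 0 := ne_of_gt (Real.rpow_pos_of_pos two_pos _)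
  rcases hε k J with hcase | hcase
  · -- ε = 1 : even level chosen
    have hlv : lv ε k c = 2*k := by rw [lv, ← hJ, if_neg (by rw [hcase]; norm_num)]
    have hxp1 : xp ε n z (2*k-1) (jj (2*n) (2*k-1) i) = 0 := by
      rw [xp, if_neg]
      intro hcon
      obtain ⟨-, -, hcon3⟩ := hcon
      rw [if_pos (by omega : (2*k-1) % 2 = 1), hjodd, hk1', hlv] at hcon3
      omega
    have hxp2 : xp ε n z (2*k) (jj (2*n) (2*k) i) =
        ((2:ℝ) ^ ((((k:ℕ):ℝ)-1)/2) / (2:ℝ) ^ (((((2*k:ℕ)):ℝ)-1)/2)) • z k J := by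
      rw [xp, if_pos]
      · rw [if_neg (by omega : ¬ (2*k) % 2 = 1), hjeven, hk2', hJ]
      · refine ⟨by omega, by omega, ?_⟩
        rw [if_neg (by omega : ¬ (2*k) % 2 = 1), hjeven, hk2', hlv]
    rw [hxp1, hxp2, smul_zero, zero_add, hddeven, smul_smul]
    rw [if_neg (by rw [hcase]; norm_num), ← hcomp k J hk1 hkn,
      if_neg (by rw [hcase]; norm_num)]
    congr 1
    field_simp
  · -- ε = -1 : odd level chosen
    have hlv : lv ε k c = 2*k-1 := by rw [lv, ← hJ, if_pos hcase]
    have hxp2 : xp ε n z (2*k) (jj (2*n) (2*k) i) = 0 := by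
      rw [xp, if_neg]
      intro hcon
      obtain ⟨-, -, hcon3⟩ := hcon
      rw [if_neg (by omega : ¬ (2*k) % 2 = 1), hjeven, hk2', hlv] at hcon3
      omega
    have hxp1 : xp ε n z (2*k-1) (jj (2*n) (2*k-1) i) =
        ((2:ℝ) ^ ((((k:ℕ):ℝ)-1)/2) / (2:ℝ) ^ (((((2*k-1:ℕ)):ℝ)-1)/2)) • z k J := by
      rw [xp, if_pos]
      · rw [if_pos (by omega : (2*k-1) % 2 = 1), hjodd, hk1', hJ]
      · refine ⟨by omega, by omega, ?_⟩
        rw [if_pos (by omega : (2*k-1) % 2 = 1), hjodd, hk1', hlv]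
    rw [hxp1, hxp2, smul_zero, add_zero, hddodd, smul_smul]
    rw [if_pos hcase, ← hcomp k J hk1 hkn, if_pos hcase]
    congr 1
    field_simp

end Xp
section Transfer
variable {X : Type*} [NormedAddCommGroup X] [NormedSpace ℝ X]

lemma l2norm_xp (ε : ℕ → ℕ → ℝ) (hε : ∀ k j, ε k j = 1 ∨ ε k j = -1) (n : ℕ) (z : ℕ → ℕ → X)
    (δ' : ℕ → ℝ) (η : ℕ → ℕ → ℝ)
    (hcomp : ∀ k j, 1 ≤ k → k ≤ n → δ' (if ε k j = -1 then 2*k-1 else 2*k) = η k j) :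
    l2norm (walshSum (xp ε n z) (fun l _ => δ' l) 1 (2*n)) = l2norm (walshSum z η 1 n) := by
  rw [l2norm_walshSum, l2norm_walshSum]
  congr 1
  have step1 : ∀ i ∈ Finset.range (2^(2*n)),
      ((2:ℝ)^(2*n))⁻¹ * ‖dVal (xp ε n z) (fun l _ => δ' l) (2*n) i‖^2
      = (fun i0 => ((2:ℝ)^(2*n))⁻¹ * ‖dVal z η n i0‖^2) (Phi ε n i) := by
    intro i _
    simp only
    rw [dVal_xp ε hε n z δ' η hcomp i]
  rw [Finset.sum_congr rfl step1]
  have h4 : (2:ℕ)^(2*n) = 4^n := (four_pow n).symm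
  rw [h4, sum_Phi ε n (fun i0 => ((2:ℝ)^(2*n))⁻¹ * ‖dVal z η n i0‖^2), Finset.mul_sum]
  apply Finset.sum_congr rfl
  intro i _
  have h2 : (2:ℝ)^(2*n) = 2^n * 2^n := by rw [two_mul, pow_add]
  rw [h2]
  have hne : (2:ℝ)^n ≠ 0 := by positivity
  field_simp

end Transfer
section Bound
variable {X Y : Type*} [NormedAddCommGroup X] [NormedSpace ℝ X]
  [NormedAddCommGroup Y] [NormedSpace ℝ Y]

/-- partial discrete Walsh sum with unit signs. -/
noncomputable def Pp (z : ℕ → ℕ → X) (N k i : ℕ) : X :=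
  ∑ m ∈ Finset.Icc 1 k, ((-1:ℝ)^(dd N m i) * (2:ℝ) ^ (((m:ℝ)-1)/2)) • z m (jj N m i)

lemma Pp_succ (z : ℕ → ℕ → X) (N k i : ℕ) :
    Pp z N (k+1) i = Pp z N k i +
      ((-1:ℝ)^(dd N (k+1) i) * (2:ℝ) ^ ((((k+1:ℕ):ℝ)-1)/2)) • z (k+1) (jj N (k+1) i) := by
  rw [Pp, Pp, Finset.sum_Icc_succ_top (by omega)]

lemma dVal_ones (z : ℕ → ℕ → X) (N i : ℕ) :
    dVal z (fun _ _ => 1) N i = Pp z N N i := by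
  rw [dVal, Pp]
  exact Finset.sum_congr rfl (fun k _ => by rw [one_mul])

lemma div_agree {N k m : ℕ} (hm : m ≤ k) (hkN : k ≤ N) {i i' : ℕ}
    (h : i / 2^(N-k) = i' / 2^(N-k)) :
    dd N m i = dd N m i' ∧ jj N m i = jj N m i' := by
  have h1 : (2:ℕ)^(N-m) = 2^(N-k) * 2^(k-m) := by rw [← pow_add]; congr 1; omega
  have h2 : (2:ℕ)^(N-m+1) = 2^(N-k) * 2^(k-m+1) := by rw [← pow_add]; congr 1; omega
  constructor
  · rw [dd, dd, h1, ← Nat.div_div_eq_div_mul, ← Nat.div_div_eq_div_mul, h]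
  · rw [jj, jj, h2, ← Nat.div_div_eq_div_mul, ← Nat.div_div_eq_div_mul, h]

lemma Pp_congr (z : ℕ → ℕ → X) {N k : ℕ} {i i' : ℕ} (hkN : k ≤ N)
    (h : i / 2^(N-k) = i' / 2^(N-k)) : Pp z N k i = Pp z N k i' := by
  rw [Pp, Pp]
  apply Finset.sum_congr rfl
  intro m hm
  rw [Finset.mem_Icc] at hm
  obtain ⟨hd, hj⟩ := div_agree hm.2 hkN h
  rw [hd, hj]

lemma Pp_le (z : ℕ → ℕ → X) (N : ℕ) (M : ℝ)
    (hM : ∀ i < 2^N, ‖Pp z N N i‖ ≤ M) :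
    ∀ d k, k + d = N → ∀ i < 2^N, ‖Pp z N k i‖ ≤ M := by
  intro d
  induction d with
  | zero =>
    intro k hk i hi
    have : k = N := by omega
    subst this
    exact hM i hi
  | succ d ih =>
    intro k hk i hi
    have hkN : k + 1 ≤ N := by omega
    set Mh := 2^(N-(k+1)) with hMh
    have hMhpos : 0 < Mh := Nat.pow_pos (by norm_num)
    have hB : (2:ℕ)^(N-k) = Mh * 2 := by
      rw [hMh, ← pow_succ]
      congr 1
      omega
    set B := 2^(N-k) with hBdef
    have hBpos : 0 < B := Nat.pow_pos (by norm_num)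
    set q := i / B with hq
    set r' := i % B % Mh with hr'def
    have hr' : r' < Mh := Nat.mod_lt _ hMhpos
    set i0 := q * B + r' with hi0
    set i1 := i0 + Mh with hi1
    have hq0 : i0 / B = q := by
      rw [nat_div_eq_iff hBpos]
      constructor
      · omega
      · have : r' < B := by omega
        calc i0 < q * B + B := by omega
        _ = (q+1) * B := by ring
    have hq1 : i1 / B = q := by
      rw [nat_div_eq_iff hBpos]
      constructor
      · omega
      · calc i1 < q * B + B := by omega
        _ = (q+1) * B := by ring
    have h2N : (2:ℕ)^N = 2^k * B := by rw [hBdef, ← pow_add]; congr 1; omega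
    have hqlt : q < 2^k := by
      rw [hq]
      apply Nat.div_lt_of_lt_mul
      rwa [mul_comm, ← h2N]
    have hi0N : i0 < 2^N := by
      have : i0 < (q+1) * B := by
        calc i0 < q * B + B := by omega
        _ = (q+1) * B := by ring
      calc i0 < (q+1) * B := this
      _ ≤ 2^k * B := Nat.mul_le_mul_right B (by omega)
      _ = 2^N := h2N.symm
    have hi1N : i1 < 2^N := by
      have : i1 < (q+1) * B := by
        calc i1 < q * B + B := by omega
        _ = (q+1) * B := by ring
      calc i1 < (q+1) * B := this
      _ ≤ 2^k * B := Nat.mul_le_mul_right B (by omega)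
      _ = 2^N := h2N.symm
    have hdd0 : dd N (k+1) i0 = 0 := by
      rw [dd, ← hMh]
      have hdiv : i0 / Mh = 2 * q := by
        have : i0 = Mh * (2*q) + r' := by rw [hi0, hB]; ring
        rw [this, Nat.mul_add_div hMhpos, Nat.div_eq_of_lt hr']
        omega
      rw [hdiv]
      omega
    have hdd1 : dd N (k+1) i1 = 1 := by
      rw [dd, ← hMh]
      have hdiv : i1 / Mh = 2 * q + 1 := by
        have : i1 = Mh * (2*q+1) + r' := by rw [hi1, hi0, hB]; ring
        rw [this, Nat.mul_add_div hMhpos, Nat.div_eq_of_lt hr']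
      rw [hdiv]
      omega
    have hNk : N - (k+1) + 1 = N - k := by omega
    have hjj0 : jj N (k+1) i0 = jj N (k+1) i := by
      rw [jj, jj, hNk, ← hBdef, hq0, hq]
    have hjj1 : jj N (k+1) i1 = jj N (k+1) i := by
      rw [jj, jj, hNk, ← hBdef, hq1, hq]
    have hP0 : Pp z N k i0 = Pp z N k i := Pp_congr z (by omega) (by rw [← hBdef, hq0, hq])
    have hP1 : Pp z N k i1 = Pp z N k i := Pp_congr z (by omega) (by rw [← hBdef, hq1, hq])
    have heq : (2:ℝ) • Pp z N k i = Pp z N (k+1) i0 + Pp z N (k+1) i1 := by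
      rw [Pp_succ, Pp_succ, hP0, hP1, hdd0, hdd1, hjj0, hjj1]
      rw [pow_zero, pow_one, one_mul, neg_one_mul]
      rw [add_add_add_comm, ← add_smul, add_neg_cancel, zero_smul, add_zero, two_smul]
    have h0 := ih (k+1) (by omega) i0 hi0N
    have h1 := ih (k+1) (by omega) i1 hi1N
    have hnorm : ‖(2:ℝ) • Pp z N k i‖ ≤ M + M := by
      rw [heq]
      exact le_trans (norm_add_le _ _) (add_le_add h0 h1)
    rw [norm_smul, Real.norm_ofNat] at hnorm
    linarith

lemma coef_smul_le (z : ℕ → ℕ → X) (N : ℕ) (M : ℝ)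
    (hM : ∀ i < 2^N, ‖Pp z N N i‖ ≤ M) :
    ∀ k, 1 ≤ k → k ≤ N → ∀ i < 2^N,
      (2:ℝ) ^ (((k:ℝ)-1)/2) * ‖z k (jj N k i)‖ ≤ 2 * M := by
  intro k hk1 hkN i hi
  obtain ⟨k', rfl⟩ : ∃ k', k = k' + 1 := ⟨k - 1, by omega⟩
  have hsucc := Pp_succ z N k' i
  have hterm : ((-1:ℝ)^(dd N (k'+1) i) * (2:ℝ) ^ ((((k'+1:ℕ):ℝ)-1)/2)) • z (k'+1) (jj N (k'+1) i)
      = Pp z N (k'+1) i - Pp z N k' i := by rw [hsucc]; abel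
  have hb1 := Pp_le z N M hM (N - (k'+1)) (k'+1) (by omega) i hi
  have hb2 := Pp_le z N M hM (N - k') k' (by omega) i hi
  have hn : ‖((-1:ℝ)^(dd N (k'+1) i) * (2:ℝ) ^ ((((k'+1:ℕ):ℝ)-1)/2)) • z (k'+1) (jj N (k'+1) i)‖
      ≤ 2 * M := by
    rw [hterm]
    calc ‖Pp z N (k'+1) i - Pp z N k' i‖ ≤ ‖Pp z N (k'+1) i‖ + ‖Pp z N k' i‖ := norm_sub_le _ _
    _ ≤ 2 * M := by linarith
  rw [norm_smul, Real.norm_eq_abs, abs_mul, abs_pow, abs_neg, abs_one, one_pow, one_mul,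
    abs_of_pos (Real.rpow_pos_of_pos two_pos _)] at hn
  exact hn

lemma norm_dVal_le (T : X →L[ℝ] Y) (z : ℕ → ℕ → X) (N : ℕ) (M : ℝ) (hM0 : 0 ≤ M)
    (hM : ∀ i < 2^N, ‖Pp z N N i‖ ≤ M) :
    ∀ i < 2^N, ‖dVal (fun k j => T (z k j)) (fun k _ => (-1:ℝ)^k) N i‖
      ≤ (N:ℝ) * (2 * ‖T‖ * M) := by
  intro i hi
  rw [dVal]
  refine le_trans (norm_sum_le _ _) ?_
  have card : (Finset.Icc 1 N).card = N := by rw [Nat.card_Icc]; omega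
  calc ∑ k ∈ Finset.Icc 1 N,
      ‖((fun k _ => (-1:ℝ)^k) k (jj N k i) * (-1:ℝ)^(dd N k i) * (2:ℝ) ^ (((k:ℝ)-1)/2)) •
        T (z k (jj N k i))‖
      ≤ ∑ k ∈ Finset.Icc 1 N, 2 * ‖T‖ * M := by
        apply Finset.sum_le_sum
        intro k hk
        rw [Finset.mem_Icc] at hk
        rw [norm_smul, Real.norm_eq_abs]
        simp only
        rw [abs_mul, abs_mul, abs_pow, abs_pow, abs_neg, abs_one, one_pow, one_pow,
          one_mul, one_mul, abs_of_pos (Real.rpow_pos_of_pos two_pos _)]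
        calc (2:ℝ) ^ (((k:ℝ)-1)/2) * ‖T (z k (jj N k i))‖
            ≤ (2:ℝ) ^ (((k:ℝ)-1)/2) * (‖T‖ * ‖z k (jj N k i)‖) := by
              apply mul_le_mul_of_nonneg_left (T.le_opNorm _)
                (le_of_lt (Real.rpow_pos_of_pos two_pos _))
        _ = ‖T‖ * ((2:ℝ) ^ (((k:ℝ)-1)/2) * ‖z k (jj N k i)‖) := by ring
        _ ≤ ‖T‖ * (2 * M) := by
              apply mul_le_mul_of_nonneg_left
                (coef_smul_le z N M hM k hk.1 hk.2 i hi) (norm_nonneg T)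
        _ = 2 * ‖T‖ * M := by ring
  _ = (N:ℝ) * (2 * ‖T‖ * M) := by
        rw [Finset.sum_const, card, nsmul_eq_mul]

lemma muCC_witness (T : X →L[ℝ] Y) (N : ℕ) (z : ℕ → ℕ → X) :
    l2norm (walshSum (fun k j => T (z k j)) (fun k _ => (-1:ℝ)^k) 1 N) ≤
      ((2:ℝ)^N * (2*(N:ℝ)) * ‖T‖ + 1) * l2norm (walshSum z (fun _ _ => 1) 1 N) := by
  set M2 := ∑ i ∈ Finset.range (2^N), ‖dVal z (fun _ _ => (1:ℝ)) N i‖^2 with hM2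
  have hM2nn : 0 ≤ M2 := Finset.sum_nonneg (fun i _ => sq_nonneg _)
  set M := Real.sqrt M2 with hMdef
  have hMnn : 0 ≤ M := Real.sqrt_nonneg _
  have hV : ∀ i < 2^N, ‖Pp z N N i‖ ≤ M := by
    intro i hi
    rw [← dVal_ones]
    have h1 : ‖dVal z (fun _ _ => (1:ℝ)) N i‖^2 ≤ M2 :=
      Finset.single_le_sum (f := fun i => ‖dVal z (fun _ _ => (1:ℝ)) N i‖^2)
        (fun _ _ => sq_nonneg _) (Finset.mem_range.2 hi)
    calc ‖dVal z (fun _ _ => (1:ℝ)) N i‖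
        = Real.sqrt (‖dVal z (fun _ _ => (1:ℝ)) N i‖^2) := (Real.sqrt_sq (norm_nonneg _)).symm
    _ ≤ M := Real.sqrt_le_sqrt h1
  have hU := norm_dVal_le T z N M hMnn hV
  rw [l2norm_walshSum, l2norm_walshSum]
  have hL : ∑ i ∈ Finset.range (2^N),
      ((2:ℝ)^N)⁻¹ * ‖dVal (fun k j => T (z k j)) (fun k _ => (-1:ℝ)^k) N i‖^2
      ≤ ((N:ℝ) * (2 * ‖T‖ * M))^2 := by
    calc ∑ i ∈ Finset.range (2^N),
        ((2:ℝ)^N)⁻¹ * ‖dVal (fun k j => T (z k j)) (fun k _ => (-1:ℝ)^k) N i‖^2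
        ≤ ∑ i ∈ Finset.range (2^N), ((2:ℝ)^N)⁻¹ * ((N:ℝ) * (2 * ‖T‖ * M))^2 := by
          apply Finset.sum_le_sum
          intro i hi
          rw [Finset.mem_range] at hi
          apply mul_le_mul_of_nonneg_left ?_ (by positivity)
          exact pow_le_pow_left₀ (norm_nonneg _) (hU i hi) 2
    _ = ((N:ℝ) * (2 * ‖T‖ * M))^2 := by
          rw [Finset.sum_const, Finset.card_range, nsmul_eq_mul]
          push_cast
          field_simp
  have hR : ∑ i ∈ Finset.range (2^N), ((2:ℝ)^N)⁻¹ * ‖dVal z (fun _ _ => (1:ℝ)) N i‖^2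
      = ((2:ℝ)^N)⁻¹ * M2 := by rw [hM2, Finset.mul_sum]
  rw [hR]
  refine le_trans (Real.sqrt_le_sqrt hL) ?_
  rw [Real.sqrt_sq (by positivity)]
  rw [Real.sqrt_mul (by positivity) M2, ← hMdef]
  have hs : ((2:ℝ)^N)⁻¹ ≤ Real.sqrt (((2:ℝ)^N)⁻¹) := by
    have hpos : (0:ℝ) < 2^N := by positivity
    have h1 : ((2:ℝ)^N)⁻¹ ≤ 1 := by
      rw [inv_le_one_iff₀]
      right
      exact one_le_pow₀ (by norm_num)
    have h3 := Real.sq_sqrt (le_of_lt (inv_pos.2 hpos))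
    nlinarith [Real.sqrt_nonneg (((2:ℝ)^N)⁻¹),
      sq_nonneg (Real.sqrt (((2:ℝ)^N)⁻¹) - 1)]
  have hTnn : (0:ℝ) ≤ ‖T‖ := norm_nonneg _
  have hsnn : 0 ≤ Real.sqrt (((2:ℝ)^N)⁻¹) := Real.sqrt_nonneg _
  have h1 : (N:ℝ) * (2 * ‖T‖ * M) = ((2:ℝ)^N * (2*(N:ℝ)) * ‖T‖) * (((2:ℝ)^N)⁻¹ * M) := by
    field_simp
  rw [h1]
  have h2 : ((2:ℝ)^N * (2*(N:ℝ)) * ‖T‖) * (((2:ℝ)^N)⁻¹ * M)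
      ≤ ((2:ℝ)^N * (2*(N:ℝ)) * ‖T‖) * (Real.sqrt (((2:ℝ)^N)⁻¹) * M) :=
    mul_le_mul_of_nonneg_left (mul_le_mul_of_nonneg_right hs hMnn) (by positivity)
  refine h2.trans ?_
  apply mul_le_mul_of_nonneg_right ?_ (by positivity)
  linarith

end Bound
end Prop1
/-- Proposition 1: `μ_n(T) ≤ μ_{2n}°°(T)`. -/
theorem mu_le_muCC_double {X Y : Type*} [NormedAddCommGroup X] [NormedSpace ℝ X]
    [NormedAddCommGroup Y] [NormedSpace ℝ Y] (T : X →L[ℝ] Y) (n : ℕ) (hn : 1 ≤ n) :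
    mu T n ≤ muCC T (2*n) := by
  rw [mu, muCC]
  apply csInf_le_csInf
  · exact ⟨0, fun c hc => le_trans zero_le_one hc.1⟩
  · refine ⟨(2:ℝ)^(2*n) * (2*((2*n:ℕ):ℝ)) * ‖T‖ + 1, ?_, ?_⟩
    · have : (0:ℝ) ≤ (2:ℝ)^(2*n) * (2*((2*n:ℕ):ℝ)) * ‖T‖ := by positivity
      linarith
    · intro x
      exact Prop1.muCC_witness T (2*n) x
  · rintro c ⟨hc1, hc2⟩
    refine ⟨hc1, ?_⟩
    intro x ε hε
    have hcomp1 : ∀ k j, 1 ≤ k → k ≤ n →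
        (fun l => (-1:ℝ)^l) (if ε k j = -1 then 2*k-1 else 2*k) = ε k j := by
      intro k j hk1 hkn
      rcases hε k j with h | h
      · rw [h, if_neg (by norm_num : ¬(1:ℝ) = -1)]
        exact Even.neg_one_pow ⟨k, by ring⟩
      · rw [h, if_pos rfl]
        exact Odd.neg_one_pow ⟨k-1, by omega⟩
    have hcomp2 : ∀ k j, 1 ≤ k → k ≤ n →
        (fun _ => (1:ℝ)) (if ε k j = -1 then 2*k-1 else 2*k) = (fun _ _ => (1:ℝ)) k j :=
      fun _ _ _ _ => rfl
    have e1 : l2norm (walshSum (fun k j => T (x k j)) ε 1 n)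
        = l2norm (walshSum (Prop1.xp ε n (fun k j => T (x k j))) (fun l _ => (-1:ℝ)^l) 1 (2*n)) :=
      (Prop1.l2norm_xp ε hε n (fun k j => T (x k j)) (fun l => (-1:ℝ)^l) ε hcomp1).symm
    have e2 : (Prop1.xp ε n (fun k j => T (x k j)))
        = fun l j' => T (Prop1.xp ε n x l j') :=
      funext fun l => funext fun j' => Prop1.xp_T ε n x T l j'
    have e3 : l2norm (walshSum (Prop1.xp ε n x) (fun l _ => (1:ℝ)) 1 (2*n))
        = l2norm (walshSum x (fun _ _ => (1:ℝ)) 1 n) :=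
      Prop1.l2norm_xp ε hε n x (fun _ => (1:ℝ)) (fun _ _ => (1:ℝ)) hcomp2
    rw [e1, e2]
    exact le_trans (hc2 (Prop1.xp ε n x)) (le_of_eq (by rw [e3]))
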